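/- A finitely generated abelian group is discriminating if and only if it is torsion-free (equivalently, isomorphic to ℤⁿ for some n). -/

import Mathlib

/-- A group G is discriminating if for every finite list of elements of G × G there is
a homomorphism G × G → G killing exactly the trivial ones. -/
def IsDiscriminating (G : Type*) [Group G] : Prop :=
  ∀ (N : ℕ) (h : Fin N → G × G),
    ∃ ρ : G × G →* G, ∀ i, ρ (h i) = 1 ↔ h i = 1

/-- The old Mathlib `Monoid.IsTorsionFree` (removed): every non-identity element has infinite order. -/
def Monoid.IsTorsionFree (G : Type*) [Monoid G] : Prop :=
  ∀ g : G, g ≠ 1 → ¬IsOfFinOrder g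

/-- Subgroups of finitely generated abelian groups are finitely generated. -/
lemma aux_subgroup_fg {G : Type*} [CommGroup G] [Group.FG G] (H : Subgroup G) : Group.FG H := by
  haveI : Module.Finite ℤ (Additive G) := Module.Finite.iff_addGroup_fg.mpr inferInstance
  haveI : IsNoetherian ℤ (Additive G) := inferInstance
  have h2 : (AddSubgroup.toIntSubmodule H.toAddSubgroup).FG := IsNoetherian.noetherian _
  rw [Group.fg_iff_subgroup_fg, Subgroup.fg_iff_add_fg]
  rw [Submodule.fg_iff_addSubgroup_fg, AddSubgroup.toIntSubmodule_toAddSubgroup] at h2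
  exact h2

/-- Over a finite-rank free `ℤ`-module, one can find a linear functional not vanishing on any
given finite list of nonzero vectors. -/
lemma exists_int_functional {M : Type*} [AddCommGroup M] [Module ℤ M]
    [Module.Free ℤ M] [Module.Finite ℤ M] :
    ∀ (N : ℕ) (v : Fin N → M), ∃ φ : M →ₗ[ℤ] ℤ, ∀ i, v i ≠ 0 → φ (v i) ≠ 0 := by
  intro N
  induction N with
  | zero => exact fun v => ⟨0, fun i => i.elim0⟩
  | succ n ih =>
    intro v
    obtain ⟨φ, hφ⟩ := ih (fun j => v j.succ)
    by_cases h0 : v 0 = 0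
    · refine ⟨φ, fun i => Fin.cases (fun h => absurd h0 h) (fun j hj => hφ j hj) i⟩
    · set b := Module.Free.chooseBasis ℤ M with hb
      have hr : b.repr (v 0) ≠ 0 := fun h => h0 (by simpa using (map_eq_zero_iff _ b.repr.injective).mp h)
      obtain ⟨j, hj⟩ := Finsupp.ne_iff.mp hr
      set ψ : M →ₗ[ℤ] ℤ := b.coord j with hψ
      have hψ0 : ψ (v 0) ≠ 0 := by simpa [hψ, Module.Basis.coord_apply] using hj
      have hfin : ∀ i : Fin (n+1), {k : ℤ | v i ≠ 0 ∧ φ (v i) + k * ψ (v i) = 0}.Finite := by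
        intro i
        by_cases hvi : ψ (v i) = 0
        · rcases Fin.eq_zero_or_eq_succ i with rfl | ⟨j', rfl⟩
          · exact absurd hvi hψ0
          · by_cases hvz : v j'.succ = 0
            · convert Set.finite_empty
              ext k; simp [hvz]
            · have hne := hφ j' hvz
              convert Set.finite_empty
              ext k
              simp only [Set.mem_setOf_eq, Set.mem_empty_iff_false, iff_false, not_and]
              intro _
              rw [hvi]
              simpa using hne
        · apply Set.Subsingleton.finite
          rintro k ⟨-, hk⟩ k' ⟨-, hk'⟩
          have h3 : (k - k') * ψ (v i) = 0 := by ring_nf; linarith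
          rcases mul_eq_zero.mp h3 with h | h
          · linarith [sub_eq_zero.mp h]
          · exact absurd h hvi
      obtain ⟨k, hk⟩ := ((Set.finite_iUnion hfin).infinite_compl).nonempty
      refine ⟨φ + k • ψ, fun i hvi hzero => hk ?_⟩
      refine Set.mem_iUnion.mpr ⟨i, hvi, ?_⟩
      simpa [smul_eq_mul] using hzero

/-- A finitely generated abelian group is discriminating iff it is torsion-free. -/
theorem fg_abelian_discriminating_iff_torsion_free (G : Type*) [CommGroup G]
    [Group.FG G] : IsDiscriminating G ↔ Monoid.IsTorsionFree G := by
  constructor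
  · intro hd
    by_contra hnt
    simp only [Monoid.IsTorsionFree, not_forall, not_not] at hnt
    obtain ⟨g, hg1, hgfin⟩ := hnt
    set T := CommGroup.torsion G with hT
    haveI : Group.FG T := aux_subgroup_fg T
    have hTtor : Monoid.IsTorsion T := fun x => Submonoid.isOfFinOrder_coe.1 x.2
    haveI hTfin : Finite T := CommGroup.finite_of_fg_torsion T hTtor
    set P : Subgroup (G × G) := T.prod T with hP
    haveI hPfin : Finite P := Finite.of_equiv _ (T.prodEquiv T).symm.toEquiv
    obtain ⟨n, ⟨e⟩⟩ := Finite.exists_equiv_fin P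
    obtain ⟨ρ, hρ⟩ := hd n (fun i => (e.symm i : G × G))
    have hinj : Function.Injective (ρ.comp P.subtype) := by
      rw [injective_iff_map_eq_one]
      intro x hx
      have h1 := hρ (e x)
      rw [Equiv.symm_apply_apply] at h1
      exact Subtype.ext (h1.mp hx)
    have hmem : ∀ x : P, ρ (P.subtype x) ∈ T := by
      intro x
      have hx1 : IsOfFinOrder (x : G × G).1 := (Subgroup.mem_prod.mp x.2).1
      have hx2 : IsOfFinOrder (x : G × G).2 := (Subgroup.mem_prod.mp x.2).2
      have hfo : IsOfFinOrder (x : G × G) := by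
        have := IsOfFinOrder.prod_mk hx1 hx2
        simpa using this
      exact ρ.isOfFinOrder hfo
    have hcard : Nat.card P ≤ Nat.card T :=
      Nat.card_le_card_of_injective (fun x : P => (⟨ρ (P.subtype x), hmem x⟩ : T))
        (fun a b hab => hinj (congrArg Subtype.val hab))
    have hPT : Nat.card P = Nat.card T * Nat.card T := by
      rw [Nat.card_congr (T.prodEquiv T).toEquiv, Nat.card_prod]
    have h2 : 2 ≤ Nat.card T := by
      have : Nontrivial T := ⟨⟨⟨g, hgfin⟩, 1, fun hh => hg1 (by simpa using congrArg Subtype.val hh)⟩⟩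
      exact Finite.one_lt_card_iff_nontrivial.mpr this
    rw [hPT] at hcard
    nlinarith
  · intro htf N h
    rcases subsingleton_or_nontrivial G with hG | hG
    · refine ⟨1, fun i => ?_⟩
      have : h i = 1 := Subsingleton.elim _ _
      simp [this]
    · obtain ⟨g0, hg0⟩ := exists_ne (1 : G)
      have tf2 : Monoid.IsTorsionFree (G × G) := by
        intro x hx hfin
        have h1 : x.1 = 1 := by
          by_contra hh
          exact htf x.1 hh ((MonoidHom.fst G G).isOfFinOrder hfin)
        have h2 : x.2 = 1 := by
          by_contra hh
          exact htf x.2 hh ((MonoidHom.snd G G).isOfFinOrder hfin)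
        exact hx (Prod.ext h1 h2)
      haveI : Module.Finite ℤ (Additive G) := Module.Finite.iff_addGroup_fg.mpr inferInstance
      haveI : Module.Finite ℤ (Additive (G × G)) :=
        Module.Finite.equiv (AddEquiv.prodAdditive (G := G) (H := G)).symm.toIntLinearEquiv
      haveI : NoZeroSMulDivisors ℤ (Additive (G × G)) := by
        refine @IsAddTorsionFree.to_noZeroSMulDivisors_int _ _ (isAddTorsionFree_iff_not_isOfFinAddOrder.mpr ?_)
        intro a ha hfin
        exact tf2 a.toMul (fun hh => ha (Additive.toMul.injective (by simpa using hh)))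
          (isOfFinAddOrder_ofMul_iff.mp hfin)
      haveI : Module.Free ℤ (Additive (G × G)) := inferInstance
      obtain ⟨φ, hφ⟩ := exists_int_functional N (fun i => Additive.ofMul (h i))
      refine ⟨{ toFun := fun x => g0 ^ (φ (Additive.ofMul x)),
                map_one' := by simp,
                map_mul' := fun x y => by
                  show g0 ^ φ (Additive.ofMul (x * y)) =
                    g0 ^ φ (Additive.ofMul x) * g0 ^ φ (Additive.ofMul y)
                  rw [show Additive.ofMul (x * y) = Additive.ofMul x + Additive.ofMul y from rfl,
                    map_add, zpow_add] }, ?_⟩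
      intro i
      constructor
      · intro hone
        by_contra hne
        have hφi := hφ i (fun hz => hne (Additive.ofMul.injective (by simpa using hz)))
        exact htf g0 hg0 (isOfFinOrder_iff_zpow_eq_one.mpr ⟨_, hφi, hone⟩)
      · intro hone
        simp only [hone]
        simp
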